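/- Let F : EuclideanSpace ℝ (Fin E) → ℝ be differentiable with L-Lipschitz gradient ∇F, where L > 0. Then for every λ and every coordinate ℓ : Fin E, the coordinate-descent update satisfies F(λ − (1/L)·(∇F(λ))_ℓ • e_ℓ) ≤ F(λ) − (1/(2L))·((∇F(λ))_ℓ)², where e_ℓ is the ℓ-th standard basis vector and (∇F(λ))_ℓ the ℓ-th component of the gradient. -/

import Mathlib

open InnerProductSpace Set

/-- Descent lemma: for an `L`-smooth function,
`F (x + v) ≤ F x + ⟪∇F x, v⟫ + L/2 ‖v‖²`. -/
lemma descent_lemma {n : ℕ} (F : EuclideanSpace ℝ (Fin n) → ℝ) (L : ℝ) (hL : 0 < L)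
    (hdiff : Differentiable ℝ F) (hlip : LipschitzWith L.toNNReal (gradient F))
    (x v : EuclideanSpace ℝ (Fin n)) :
    F (x + v) ≤ F x + inner ℝ (gradient F x) v + L / 2 * ‖v‖ ^ 2 := by
  set g : ℝ → ℝ := fun t => F (x + t • v) with hg_def
  have hg : ∀ t : ℝ, HasDerivAt g (inner ℝ (gradient F (x + t • v)) v : ℝ) t := by
    intro t
    have hline : HasDerivAt (fun t : ℝ => x + t • v) v t := by
      simpa using ((hasDerivAt_id t).smul_const v).const_add x
    have := ((hdiff (x + t • v)).hasGradientAt.hasFDerivAt).comp_hasDerivAt t hline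
    exact this
  set h : ℝ → ℝ := fun t =>
    g t - t * inner ℝ (gradient F x) v - L / 2 * t ^ 2 * ‖v‖ ^ 2 with hh_def
  have hh : ∀ t : ℝ, HasDerivAt h
      ((inner ℝ (gradient F (x + t • v)) v : ℝ) - inner ℝ (gradient F x) v - L * t * ‖v‖ ^ 2) t := by
    intro t
    have h1 : HasDerivAt (fun t : ℝ => t * (inner ℝ (gradient F x) v : ℝ))
        (inner ℝ (gradient F x) v : ℝ) t := by
      simpa using (hasDerivAt_id t).mul_const (inner ℝ (gradient F x) v : ℝ)
    have h2 : HasDerivAt (fun t : ℝ => L / 2 * t ^ 2 * ‖v‖ ^ 2)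
        (L * t * ‖v‖ ^ 2) t := by
      have := ((hasDerivAt_pow 2 t).const_mul (L / 2)).mul_const (‖v‖ ^ 2)
      exact this.congr_deriv (by ring)
    exact ((hg t).sub h1).sub h2
  have hanti : AntitoneOn h (Icc (0 : ℝ) 1) := by
    apply antitoneOn_of_deriv_nonpos (convex_Icc 0 1)
    · exact fun t _ => ((hh t).continuousAt).continuousWithinAt
    · exact fun t _ => ((hh t).differentiableAt).differentiableWithinAt
    · intro t ht
      rw [interior_Icc] at ht
      rw [(hh t).deriv]
      have hinner : (inner ℝ (gradient F (x + t • v)) v : ℝ) - inner ℝ (gradient F x) v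
          = inner ℝ (gradient F (x + t • v) - gradient F x) v := by
        rw [inner_sub_left]
      rw [hinner]
      have hle : (inner ℝ (gradient F (x + t • v) - gradient F x) v : ℝ)
          ≤ ‖gradient F (x + t • v) - gradient F x‖ * ‖v‖ := real_inner_le_norm _ _
      have hlipb : ‖gradient F (x + t • v) - gradient F x‖ ≤ L * (t * ‖v‖) := by
        have := hlip.dist_le_mul (x + t • v) x
        rw [dist_eq_norm] at this
        calc ‖gradient F (x + t • v) - gradient F x‖ ≤ L.toNNReal * ‖t • v‖ := by
              simpa [dist_eq_norm] using this
          _ = L * (t * ‖v‖) := by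
              rw [Real.coe_toNNReal L hL.le, norm_smul, Real.norm_eq_abs,
                abs_of_pos ht.1]
        -- done
      have hv : (0 : ℝ) ≤ ‖v‖ := norm_nonneg v
      nlinarith [real_inner_le_norm (gradient F (x + t • v) - gradient F x) v]
  have h10 : h 1 ≤ h 0 := hanti (by simp : (0:ℝ) ∈ Icc (0:ℝ) 1)
    (by simp : (1:ℝ) ∈ Icc (0:ℝ) 1) zero_le_one
  have h0 : h 0 = F x := by simp [hh_def, hg_def]
  have h1 : h 1 = F (x + v) - inner ℝ (gradient F x) v - L / 2 * ‖v‖ ^ 2 := by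
    simp [hh_def, hg_def]
  rw [h0, h1] at h10
  linarith

/-- Descent lemma for a coordinate-descent step with stepsize `1/L` on an
`L`-smooth function. -/
theorem stmt3 (E : ℕ)
    (F : EuclideanSpace ℝ (Fin E) → ℝ) (L : ℝ) (hL : 0 < L)
    (hdiff : Differentiable ℝ F)
    (hlip : LipschitzWith L.toNNReal (gradient F))
    (lam : EuclideanSpace ℝ (Fin E)) (ℓ : Fin E) :
    F (lam - ((1 / L) * gradient F lam ℓ) • EuclideanSpace.single ℓ (1 : ℝ)) ≤
      F lam - (1 / (2 * L)) * (gradient F lam ℓ) ^ 2 := by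
  set v : EuclideanSpace ℝ (Fin E) :=
    -(((1 / L) * gradient F lam ℓ) • EuclideanSpace.single ℓ (1 : ℝ)) with hv_def
  have key := descent_lemma F L hL hdiff hlip lam v
  have hx : lam - ((1 / L) * gradient F lam ℓ) • EuclideanSpace.single ℓ (1 : ℝ) = lam + v := by
    rw [hv_def]; abel
  rw [hx]
  have hinner : (inner ℝ (gradient F lam) v : ℝ) = -((1 / L) * (gradient F lam ℓ) ^ 2) := by
    rw [hv_def, inner_neg_right, real_inner_smul_right,
      EuclideanSpace.inner_single_right]
    ring_nf
    simp [mul_comm]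
    ring
  have hnorm : ‖v‖ ^ 2 = (1 / L) ^ 2 * (gradient F lam ℓ) ^ 2 := by
    rw [hv_def, norm_neg, norm_smul, EuclideanSpace.norm_single]
    simp [mul_pow, sq_abs]
  rw [hinner, hnorm] at key
  have : L / 2 * ((1 / L) ^ 2 * (gradient F lam ℓ) ^ 2)
      = 1 / (2 * L) * (gradient F lam ℓ) ^ 2 := by
    field_simp
  have h2 : 1 / L * (gradient F lam ℓ) ^ 2
      = 2 * (1 / (2 * L) * (gradient F lam ℓ) ^ 2) := by
    field_simp
  linarith [key, this.le, this.ge]
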